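/- Let {s_1,...,s_K} be an (M,K,L)-schedule sequence set with respect to a partition of the K nodes into W nonempty groups whose smallest group size is k, and suppose in addition that for every node N_i ∈ G_m the number of time slots t ∈ Z_L with s_i(t) = T_m (the number of transmitting symbols in s_i) is a multiple of W. Then L ≥ ⌈8(k−1)²·W/9⌉. -/

import Mathlib

/-- A schedule symbol for a system with `W` channels: `T m` means "transmit on
channel `m`" and `R r` means "receive on channel `r`". -/
inductive SchedSym (W : ℕ) where
  | T : Fin W → SchedSym W
  | R : Fin W → SchedSym W
deriving DecidableEq

/-- `IsScheduleSet W K L G s` says that `s` is an `(M,K,L)`-schedule sequence set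
(for any number of channels `M ≥ W`) with respect to the partition of the `K` nodes
into the `W` groups given by the group-assignment map `G` (node `i` lies in group
`G i`). Sequences are modeled as `ℕ → SchedSym W`, indexed modulo `L`.

* `own_channel`: a node in group `m` only uses the transmit symbol `T m`;
* `intra`: intra-group requirement (eq. (1) of the paper) for all offsets `τ ∈ Z_L^K`;
* `inter`: inter-group requirement (eq. (2) of the paper) for all offsets `τ ∈ Z_L^K`. -/
structure IsScheduleSet (W K L : ℕ) (G : Fin K → Fin W)
    (s : Fin K → ℕ → SchedSym W) : Prop where
  own_channel : ∀ (i : Fin K) (t : ℕ) (m : Fin W), s i t = SchedSym.T m → m = G i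
  intra : ∀ τ : Fin K → ℕ, (∀ i, τ i < L) → ∀ i j : Fin K, i ≠ j → G i = G j →
    ∃ t < L, s i ((t + τ i) % L) = SchedSym.T (G i) ∧
      s j ((t + τ j) % L) = SchedSym.R (G i) ∧
      ∀ x : Fin K, x ≠ i → x ≠ j → G x = G i → s x ((t + τ x) % L) ≠ SchedSym.T (G i)
  inter : ∀ τ : Fin K → ℕ, (∀ i, τ i < L) → ∀ i j : Fin K, G i ≠ G j →
    ∃ t < L, s i ((t + τ i) % L) = SchedSym.T (G i) ∧
      s j ((t + τ j) % L) = SchedSym.R (G i) ∧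
      ∀ x : Fin K, x ≠ i → G x = G i → s x ((t + τ x) % L) ≠ SchedSym.T (G i)

/-- The size of group `m` under the group-assignment map `G`. -/
def groupSize {W K : ℕ} (G : Fin K → Fin W) (m : Fin W) : ℕ :=
  (Finset.univ.filter (fun i => G i = m)).card


open Finset

section ScheduleAux

/-- Harmonic number. -/
noncomputable def Hsum (n : ℕ) : ℝ := ∑ i ∈ Finset.range n, (1 : ℝ) / (i + 1)

lemma Hsum_succ (n : ℕ) : Hsum (n + 1) = Hsum n + 1 / (n + 1) := by
  simp [Hsum, Finset.sum_range_succ]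

lemma Hsum_nonneg (n : ℕ) : 0 ≤ Hsum n := by
  apply Finset.sum_nonneg; intro i _; positivity

lemma Hsum_ge_one (n : ℕ) (hn : 1 ≤ n) : 1 ≤ Hsum n := by
  induction n with
  | zero => omega
  | succ m ih =>
    rcases Nat.eq_or_lt_of_le hn with h | h
    · simp [Hsum, ← h]
    · have h1 : 1 ≤ m := by omega
      have h2 := ih h1
      rw [Hsum_succ]
      have h3 : (0:ℝ) ≤ 1 / ((m:ℝ)+1) := by positivity
      linarith

private lemma harm_aux (x ν : ℝ) (hx : 0 ≤ x) (hν : 2 ≤ ν) (h : 8*x^2 ≤ 9*ν) :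
    8*(x + 1/(ν+1))^2 ≤ 9*(ν+1) := by
  have hν1 : (0:ℝ) < ν + 1 := by linarith
  have key : 16 * x ≤ 9 * (ν + 1) - 8 / (ν + 1) := by
    have hrhs : 0 ≤ 9 * (ν + 1) - 8 / (ν + 1) := by
      rw [sub_nonneg, div_le_iff₀ hν1]; nlinarith
    have hsq : (16 * x)^2 ≤ (9 * (ν + 1) - 8 / (ν + 1))^2 := by
      have h3 : (9 * (ν + 1) - 8 / (ν + 1))^2 = 81*(ν+1)^2 - 144 + 64/(ν+1)^2 := by
        field_simp; ring
      have h4 : (0:ℝ) ≤ 81*(ν+1)^2 - 144 - 288 * ν := by nlinarith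
      have h5 : (0:ℝ) ≤ 64/(ν+1)^2 := by positivity
      nlinarith
    have h16 : 0 ≤ 16 * x := by linarith
    exact (pow_le_pow_iff_left₀ h16 hrhs (by norm_num)).mp hsq
  have expand : 8 * (x + 1/(ν+1))^2 = 8*x^2 + (16*x)/(ν+1) + 8/(ν+1)^2 := by
    field_simp; ring
  have step : (16*x)/(ν+1) ≤ 9 - 8/(ν+1)^2 := by
    rw [div_le_iff₀ hν1]
    calc 16 * x ≤ 9*(ν+1) - 8/(ν+1) := key
    _ = (9 - 8/(ν+1)^2) * (ν+1) := by field_simp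
  calc 8 * (x + 1/(ν+1))^2 = 8*x^2 + (16*x)/(ν+1) + 8/(ν+1)^2 := expand
  _ ≤ 9*ν + (9 - 8/(ν+1)^2) + 8/(ν+1)^2 := by linarith
  _ = 9 * (ν + 1) := by ring

/-- The key harmonic inequality `8 H_n ^ 2 ≤ 9 n`, with equality at `n = 2`. -/
lemma harm_key (n : ℕ) : 8 * (Hsum n) ^ 2 ≤ 9 * n := by
  induction n with
  | zero => simp [Hsum]
  | succ m ih =>
    match m, ih with
    | 0, _ => norm_num [Hsum]
    | 1, _ =>
      have h2 : Hsum 2 = 3/2 := by norm_num [Hsum, Finset.sum_range_succ]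
      rw [h2]; norm_num
    | (m+2), ih =>
      rw [Hsum_succ]
      have hcast : ((m + 2 : ℕ) : ℝ) = (m:ℝ) + 2 := by push_cast; ring
      have hν : (2:ℝ) ≤ (m:ℝ) + 2 := by
        have : (0:ℝ) ≤ (m:ℝ) := Nat.cast_nonneg m
        linarith
      have h := harm_aux (Hsum (m+2)) ((m:ℝ)+2) (Hsum_nonneg _) hν (by rw [← hcast]; exact ih)
      push_cast
      push_cast at h
      linarith

/-- `cdiv a L ρ = ⌈ρ a / L⌉`. -/
def cdiv (a L ρ : ℕ) : ℕ := (ρ * a + L - 1) / L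

section cdiv
variable {a L : ℕ} (ha : 1 ≤ a) (haL : a ≤ L)

lemma cdiv_le_iff (hL : 0 < L) (ρ j : ℕ) : cdiv a L ρ ≤ j ↔ ρ * a ≤ j * L := by
  unfold cdiv
  rw [Nat.div_le_iff_le_mul_add_pred hL, mul_comm j L]
  omega

lemma le_cdiv_mul (hL : 0 < L) (ρ : ℕ) : ρ * a ≤ cdiv a L ρ * L :=
  (cdiv_le_iff hL ρ _).mp le_rfl

lemma cdiv_pos (hL : 0 < L) (ha : 1 ≤ a) {ρ : ℕ} (hρ : 1 ≤ ρ) : 1 ≤ cdiv a L ρ := by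
  by_contra h
  push_neg at h
  interval_cases h' : cdiv a L ρ
  · have := (cdiv_le_iff hL ρ 0).mp (le_of_eq h')
    simp at this
    rcases this with h1 | h1 <;> omega

lemma cdiv_mono (hL : 0 < L) {ρ ρ' : ℕ} (h : ρ ≤ ρ') : cdiv a L ρ ≤ cdiv a L ρ' := by
  rw [cdiv_le_iff hL]
  calc ρ * a ≤ ρ' * a := Nat.mul_le_mul_right a h
  _ ≤ cdiv a L ρ' * L := le_cdiv_mul hL ρ'

lemma cdiv_one (hL : 0 < L) (ha : 1 ≤ a) (haL : a ≤ L) : cdiv a L 1 = 1 := by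
  have h1 : cdiv a L 1 ≤ 1 := by rw [cdiv_le_iff hL]; omega
  have h2 : 1 ≤ cdiv a L 1 := cdiv_pos hL ha le_rfl
  omega

lemma cdiv_lower (hL : 0 < L) (ha : 1 ≤ a) {ρ : ℕ} (hρ : 1 ≤ ρ) :
    (cdiv a L ρ - 1) * L < ρ * a := by
  have h1 : 1 ≤ cdiv a L ρ := cdiv_pos hL ha hρ
  by_contra h
  push_neg at h
  have := (cdiv_le_iff hL ρ (cdiv a L ρ - 1)).mpr h
  omega

end cdiv

/-- The potential function `Φ(r) = ∑_{ρ=1}^r 1/⌈ρa/L⌉`. -/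
noncomputable def Phi (a L r : ℕ) : ℝ := ∑ ρ ∈ Finset.Icc 1 r, (1 : ℝ) / (cdiv a L ρ)

lemma Phi_zero (a L : ℕ) : Phi a L 0 = 0 := by simp [Phi]

lemma Phi_nonneg (a L r : ℕ) : 0 ≤ Phi a L r := by
  apply Finset.sum_nonneg; intro i _; positivity

lemma Phi_mono (a L : ℕ) {r r' : ℕ} (h : r ≤ r') : Phi a L r ≤ Phi a L r' := by
  apply Finset.sum_le_sum_of_subset_of_nonneg
  · exact Finset.Icc_subset_Icc_right h
  · intro i _ _; positivity

lemma Phi_one (a L : ℕ) (hL : 0 < L) (ha : 1 ≤ a) (haL : a ≤ L) : Phi a L 1 = 1 := by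
  simp [Phi, cdiv_one hL ha haL]

/-- The potential drops by at least 1 for a kill of size `d ≥ ⌈ra/L⌉`. -/
lemma Phi_step (a L : ℕ) (hL : 0 < L) (ha : 1 ≤ a) {r d : ℕ} (hr : 1 ≤ r)
    (hd : r * a ≤ d * L) (hdr : d ≤ r) : Phi a L (r - d) + 1 ≤ Phi a L r := by
  have hd1 : 1 ≤ d := by
    by_contra h
    push_neg at h
    interval_cases d
    simp at hd
    omega
  have hsplit : Phi a L r = Phi a L (r - d) + ∑ ρ ∈ Finset.Ioc (r - d) r, (1:ℝ)/(cdiv a L ρ) := by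
    unfold Phi
    rw [show (1:ℕ) = 0 + 1 from rfl, Finset.Icc_add_one_left_eq_Ioc 0 r, Finset.Icc_add_one_left_eq_Ioc 0 (r - d)]
    rw [← Finset.sum_Ioc_consecutive _ (Nat.zero_le (r - d)) (Nat.sub_le r d)]
  rw [hsplit]
  have hcard : (Finset.Ioc (r - d) r).card = d := by
    rw [Nat.card_Ioc]; omega
  have hbound : ∀ ρ ∈ Finset.Ioc (r - d) r, (1:ℝ)/(cdiv a L r) ≤ 1/(cdiv a L ρ) := by
    intro ρ hρ
    rw [Finset.mem_Ioc] at hρ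
    have h1 : 1 ≤ ρ := by omega
    have hmono := cdiv_mono (a := a) hL hρ.2
    have hpos : (0:ℝ) < cdiv a L ρ := by
      have := cdiv_pos hL ha h1
      exact_mod_cast Nat.lt_of_lt_of_le Nat.zero_lt_one this
    apply one_div_le_one_div_of_le hpos
    exact_mod_cast hmono
  have hsum : (d : ℝ) * (1/(cdiv a L r)) ≤ ∑ ρ ∈ Finset.Ioc (r - d) r, (1:ℝ)/(cdiv a L ρ) := by
    calc (d:ℝ) * (1/(cdiv a L r)) = ∑ _ρ ∈ Finset.Ioc (r - d) r, (1:ℝ)/(cdiv a L r) := by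
          rw [Finset.sum_const, hcard]; ring
    _ ≤ _ := Finset.sum_le_sum hbound
  have hone : 1 ≤ (d : ℝ) * (1/(cdiv a L r)) := by
    have hcr : 1 ≤ cdiv a L r := cdiv_pos hL ha hr
    have hcd : cdiv a L r ≤ d := by rw [cdiv_le_iff hL]; exact hd
    have hpos : (0:ℝ) < cdiv a L r := by exact_mod_cast hcr
    rw [mul_one_div, le_div_iff₀ hpos, one_mul]
    exact_mod_cast hcd
  linarith

lemma tele (c : ℕ) (hc : 1 ≤ c) : ∀ m, c ≤ m →
    ∑ j ∈ Finset.Ico c m, ((1:ℝ)/j - 1/(j+1)) = 1/c - 1/m := by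
  intro m
  induction m with
  | zero => intro h; omega
  | succ n ih =>
    intro h
    rcases Nat.lt_or_ge n c with h1 | h1
    · have hcn : c = n + 1 := by omega
      subst hcn
      simp
    · rw [Finset.sum_Ico_succ_top h1, ih h1]
      have hn : (1:ℝ) ≤ (n:ℝ) := by exact_mod_cast h1.trans' hc
      push_cast
      ring

lemma Phi_band (a L u : ℕ) (hL : 0 < L) (ha : 1 ≤ a) (haL : a ≤ L) (hu : 1 ≤ u) :
    Phi a L u ≤ (L:ℝ)/a * (Hsum (cdiv a L u) - 1) + u / (cdiv a L u) := by
  set m := cdiv a L u with hm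
  have hm1 : 1 ≤ m := cdiv_pos hL ha hu
  have step1 : ∀ ρ ∈ Finset.Icc 1 u, (1:ℝ)/(cdiv a L ρ) =
      1/m + ∑ j ∈ Finset.Ico (cdiv a L ρ) m, ((1:ℝ)/j - 1/(j+1)) := by
    intro ρ hρ
    rw [Finset.mem_Icc] at hρ
    rw [tele (cdiv a L ρ) (cdiv_pos hL ha hρ.1) m (cdiv_mono hL hρ.2)]
    ring
  have hPhi1 : Phi a L u = (u:ℝ)/m +
      ∑ ρ ∈ Finset.Icc 1 u, ∑ j ∈ Finset.Ico (cdiv a L ρ) m, ((1:ℝ)/j - 1/(j+1)) := by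
    unfold Phi
    rw [Finset.sum_congr rfl step1, Finset.sum_add_distrib, Finset.sum_const, Nat.card_Icc]
    simp only [Nat.add_sub_cancel, nsmul_eq_mul]
    rw [mul_one_div]
  have step2 : ∀ ρ ∈ Finset.Icc 1 u,
      ∑ j ∈ Finset.Ico (cdiv a L ρ) m, ((1:ℝ)/j - 1/(j+1)) =
      ∑ j ∈ Finset.Ico 1 m, (if cdiv a L ρ ≤ j then (1:ℝ)/j - 1/(j+1) else 0) := by
    intro ρ hρ
    rw [Finset.mem_Icc] at hρ
    rw [← Finset.sum_filter]
    congr 1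
    ext j
    simp only [Finset.mem_filter, Finset.mem_Ico]
    constructor
    · intro ⟨h1, h2⟩
      exact ⟨⟨le_trans (cdiv_pos hL ha hρ.1) h1, h2⟩, h1⟩
    · intro ⟨⟨_, h2⟩, h3⟩
      exact ⟨h3, h2⟩
  have hswap : ∑ ρ ∈ Finset.Icc 1 u, ∑ j ∈ Finset.Ico (cdiv a L ρ) m, ((1:ℝ)/j - 1/(j+1)) =
      ∑ j ∈ Finset.Ico 1 m, ((1:ℝ)/j - 1/(j+1)) *
        (((Finset.Icc 1 u).filter (fun ρ => cdiv a L ρ ≤ j)).card : ℝ) := by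
    rw [Finset.sum_congr rfl step2, Finset.sum_comm]
    apply Finset.sum_congr rfl
    intro j _
    rw [← Finset.sum_filter, Finset.sum_const, nsmul_eq_mul, mul_comm]
  have hcount : ∀ j ∈ Finset.Ico 1 m,
      (((Finset.Icc 1 u).filter (fun ρ => cdiv a L ρ ≤ j)).card : ℝ) ≤ (j : ℝ) * L / a := by
    intro j hj
    have hsub : (Finset.Icc 1 u).filter (fun ρ => cdiv a L ρ ≤ j) ⊆ Finset.Icc 1 ((j*L)/a) := by
      intro ρ hρ
      rw [Finset.mem_filter, Finset.mem_Icc] at hρ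
      rw [Finset.mem_Icc]
      refine ⟨hρ.1.1, ?_⟩
      rw [Nat.le_div_iff_mul_le (by omega : 0 < a)]
      exact (cdiv_le_iff hL ρ j).mp hρ.2
    have h2 : (Finset.Icc 1 ((j*L)/a)).card = (j*L)/a := by
      rw [Nat.card_Icc]
      simp
    have h1 : ((Finset.Icc 1 u).filter (fun ρ => cdiv a L ρ ≤ j)).card ≤ (j*L)/a :=
      le_trans (Finset.card_le_card hsub) (le_of_eq h2)
    calc (((Finset.Icc 1 u).filter (fun ρ => cdiv a L ρ ≤ j)).card : ℝ)
        ≤ (((j*L)/a : ℕ) : ℝ) := by exact_mod_cast h1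
    _ ≤ ((j*L : ℕ) : ℝ) / a := Nat.cast_div_le
    _ = (j:ℝ) * L / a := by push_cast; ring
  have hterm : ∀ j ∈ Finset.Ico 1 m,
      ((1:ℝ)/j - 1/(j+1)) * (((Finset.Icc 1 u).filter (fun ρ => cdiv a L ρ ≤ j)).card : ℝ)
      ≤ (L:ℝ)/a * (1/(j+1)) := by
    intro j hj
    rw [Finset.mem_Ico] at hj
    have hj1 : (1:ℝ) ≤ (j:ℝ) := by exact_mod_cast hj.1
    have hg : (0:ℝ) ≤ (1:ℝ)/j - 1/(j+1) := by
      rw [sub_nonneg]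
      apply one_div_le_one_div_of_le (by linarith)
      linarith
    calc ((1:ℝ)/j - 1/(j+1)) * (((Finset.Icc 1 u).filter (fun ρ => cdiv a L ρ ≤ j)).card : ℝ)
        ≤ ((1:ℝ)/j - 1/(j+1)) * ((j:ℝ) * L / a) := by
          apply mul_le_mul_of_nonneg_left (hcount j (by rw [Finset.mem_Ico]; exact hj)) hg
    _ = (L:ℝ)/a * (((1:ℝ)/j - 1/(j+1)) * j) := by ring
    _ = (L:ℝ)/a * (1/(j+1)) := by
          congr 1
          field_simp
          ring
  have hHm : ∑ j ∈ Finset.Ico 1 m, (1:ℝ)/(j+1) = Hsum m - 1 := by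
    have : Hsum m = ∑ j ∈ Finset.Ico 0 m, (1:ℝ)/(j+1) := by
      rw [Hsum, Finset.range_eq_Ico]
    rw [this, Finset.sum_eq_sum_Ico_succ_bot (by omega : 0 < m)]
    push_cast
    ring
  calc Phi a L u = (u:ℝ)/m + ∑ ρ ∈ Finset.Icc 1 u,
        ∑ j ∈ Finset.Ico (cdiv a L ρ) m, ((1:ℝ)/j - 1/(j+1)) := hPhi1
  _ = (u:ℝ)/m + ∑ j ∈ Finset.Ico 1 m, ((1:ℝ)/j - 1/(j+1)) *
        (((Finset.Icc 1 u).filter (fun ρ => cdiv a L ρ ≤ j)).card : ℝ) := by rw [hswap]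
  _ ≤ (u:ℝ)/m + ∑ j ∈ Finset.Ico 1 m, (L:ℝ)/a * (1/(j+1)) := by
        apply add_le_add le_rfl
        exact Finset.sum_le_sum hterm
  _ = (u:ℝ)/m + (L:ℝ)/a * (Hsum m - 1) := by rw [← Finset.mul_sum, hHm]
  _ = (L:ℝ)/a * (Hsum m - 1) + (u:ℝ)/m := by ring

/-- Main arithmetic lemma: if `P ≤ Φ(u)` then `8 P² ≤ 9 u L / a`. -/
lemma MAL (a L u P : ℕ) (hL : 0 < L) (ha : 1 ≤ a) (haL : a ≤ L) (hP : 1 ≤ P)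
    (hPhi : (P:ℝ) ≤ Phi a L u) : 8 * (P:ℝ)^2 ≤ 9 * ((u:ℝ) * L / a) := by
  have hu : 1 ≤ u := by
    by_contra hcon
    push_neg at hcon
    interval_cases u
    rw [Phi_zero] at hPhi
    have : (1:ℝ) ≤ (P:ℝ) := by exact_mod_cast hP
    linarith
  have hm1 : 1 ≤ cdiv a L u := cdiv_pos hL ha hu
  obtain ⟨m', hmm⟩ : ∃ m'', cdiv a L u = m'' + 1 := ⟨cdiv a L u - 1, by omega⟩
  have ha0 : (0:ℝ) < (a:ℝ) := by exact_mod_cast ha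
  have hL0 : (0:ℝ) < (L:ℝ) := by exact_mod_cast hL
  set A : ℝ := (a:ℝ) with hA
  set Λ : ℝ := (L:ℝ) with hΛ
  set U : ℝ := (u:ℝ) with hU
  set M : ℝ := (m':ℝ) + 1 with hM
  have hM0 : (0:ℝ) < M := by
    have : (0:ℝ) ≤ (m':ℝ) := Nat.cast_nonneg m'
    rw [hM]; linarith
  set h : ℝ := Hsum m' with hh
  set HM : ℝ := Hsum (m' + 1) with hHMdef
  have hHM : HM = h + 1/M := by
    rw [hHMdef, Hsum_succ, hh, hM]
  -- (β) : U * A ≤ M * Λ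
  have hβ : U * A ≤ M * Λ := by
    have h1 : u * a ≤ cdiv a L u * L := le_cdiv_mul (a := a) hL u
    rw [hmm] at h1
    have h2 : ((u * a : ℕ) : ℝ) ≤ (((m' + 1) * L : ℕ) : ℝ) := by exact_mod_cast h1
    push_cast at h2
    rw [hU, hA, hM, hΛ]
    linarith
  -- (γ) : (M - 1) * Λ ≤ U * A
  have hγ : (M - 1) * Λ ≤ U * A := by
    have h1 : (cdiv a L u - 1) * L < u * a := cdiv_lower (a := a) hL ha hu
    rw [hmm] at h1
    simp only [Nat.add_sub_cancel] at h1
    have h2 : ((m' * L : ℕ) : ℝ) ≤ ((u * a : ℕ) : ℝ) := by exact_mod_cast le_of_lt h1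
    push_cast at h2
    rw [hU, hA, hM, hΛ]
    have : ((m':ℝ) + 1 - 1) = (m':ℝ) := by ring
    rw [this]
    linarith
  -- (α) : M * A * P ≤ M * Λ * (HM - 1) + U * A
  have hband := Phi_band a L u hL ha haL hu
  rw [hmm] at hband
  have hα : (P:ℝ) ≤ Λ/A * (HM - 1) + U/M := by
    calc (P:ℝ) ≤ Phi a L u := hPhi
    _ ≤ (L:ℝ)/a * (Hsum (m'+1) - 1) + u / ((m' + 1 : ℕ) : ℝ) := hband
    _ = Λ/A * (HM - 1) + U/M := by
        rw [hΛ, hA, hHMdef, hU, hM]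
        push_cast
        ring
  have hα' : M * A * (P:ℝ) ≤ M * Λ * (HM - 1) + U * A := by
    have h0 : (M * A) * (P:ℝ) ≤ (M * A) * (Λ/A * (HM - 1) + U/M) :=
      mul_le_mul_of_nonneg_left hα (le_of_lt (mul_pos hM0 ha0))
    calc M * A * (P:ℝ) ≤ (M * A) * (Λ/A * (HM - 1) + U/M) := h0
    _ = M * Λ * (HM - 1) + U * A := by
        field_simp
  -- harmonic facts
  have hH1 : 8 * h^2 ≤ 9 * (M - 1) := by
    have := harm_key m'
    rw [← hh] at this
    rw [hM]
    calc 8 * h^2 ≤ 9 * (m':ℝ) := this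
    _ = 9 * ((m':ℝ) + 1 - 1) := by ring
  have hH2 : 8 * HM^2 ≤ 9 * M := by
    have := harm_key (m' + 1)
    rw [← hHMdef] at this
    rw [hM]
    calc 8 * HM^2 ≤ 9 * ((m' + 1 : ℕ):ℝ) := this
    _ = 9 * ((m':ℝ) + 1) := by push_cast; ring
  -- endpoint bounds
  set C : ℝ := M * HM - M with hC
  have hMh : M - 1 + C = M * h := by
    rw [hC, hHM]
    field_simp
    ring
  have hMHM : M + C = M * HM := by rw [hC]; ring
  set X : ℝ := U * A with hX
  have hqa : 8 * ((M - 1) * Λ + C * Λ)^2 ≤ 9 * M^2 * Λ * ((M-1) * Λ) := by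
    have e1 : (M - 1) * Λ + C * Λ = Λ * (M * h) := by rw [← hMh]; ring
    rw [e1]
    have : 8 * (Λ * (M * h))^2 = (Λ^2 * M^2) * (8 * h^2) := by ring
    rw [this]
    calc (Λ^2 * M^2) * (8 * h^2) ≤ (Λ^2 * M^2) * (9 * (M-1)) := by
          apply mul_le_mul_of_nonneg_left hH1
          positivity
    _ = 9 * M^2 * Λ * ((M-1) * Λ) := by ring
  have hqb : 8 * (M * Λ + C * Λ)^2 ≤ 9 * M^2 * Λ * (M * Λ) := by
    have e1 : M * Λ + C * Λ = Λ * (M * HM) := by rw [← hMHM]; ring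
    rw [e1]
    have : 8 * (Λ * (M * HM))^2 = (Λ^2 * M^2) * (8 * HM^2) := by ring
    rw [this]
    calc (Λ^2 * M^2) * (8 * HM^2) ≤ (Λ^2 * M^2) * (9 * M) := by
          apply mul_le_mul_of_nonneg_left hH2
          positivity
    _ = 9 * M^2 * Λ * (M * Λ) := by ring
  -- convexity identity
  have hkey : 8 * (X + C * Λ)^2 ≤ 9 * M^2 * X * Λ := by
    have hid : Λ * (9 * M^2 * X * Λ - 8 * (X + C * Λ)^2) =
        (M * Λ - X) * (9 * M^2 * Λ * ((M-1) * Λ) - 8 * ((M - 1) * Λ + C * Λ)^2)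
      + (X - (M - 1) * Λ) * (9 * M^2 * Λ * (M * Λ) - 8 * (M * Λ + C * Λ)^2)
      + 8 * Λ * (M * Λ - X) * (X - (M - 1) * Λ) := by ring
    have h1 : 0 ≤ M * Λ - X := by rw [hX]; linarith
    have h2 : 0 ≤ X - (M - 1) * Λ := by rw [hX]; linarith
    have h3 : 0 ≤ (M * Λ - X) * (9 * M^2 * Λ * ((M-1) * Λ) - 8 * ((M - 1) * Λ + C * Λ)^2) :=
      mul_nonneg h1 (by linarith)
    have h4 : 0 ≤ (X - (M - 1) * Λ) * (9 * M^2 * Λ * (M * Λ) - 8 * (M * Λ + C * Λ)^2) :=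
      mul_nonneg h2 (by linarith)
    have h5 : 0 ≤ 8 * Λ * (M * Λ - X) * (X - (M - 1) * Λ) := by
      have h50 : (0:ℝ) ≤ 8 * Λ := by linarith
      exact mul_nonneg (mul_nonneg h50 h1) h2
    have h6 : 0 ≤ Λ * (9 * M^2 * X * Λ - 8 * (X + C * Λ)^2) := by
      rw [hid]; linarith
    have h7 : 0 ≤ 9 * M^2 * X * Λ - 8 * (X + C * Λ)^2 :=
      (mul_nonneg_iff_of_pos_left hL0).mp h6
    linarith
  -- conclude
  have hMP : 0 ≤ M * A * (P:ℝ) := by positivity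
  have hsq : 8 * (M * A * (P:ℝ))^2 ≤ 8 * (X + C * Λ)^2 := by
    have hXC : M * A * (P:ℝ) ≤ X + C * Λ := by
      have hCΛ : M * Λ * (HM - 1) = C * Λ := by rw [hC]; ring
      rw [hX]; linarith [hα', hCΛ.le, hCΛ.ge]
    have := pow_le_pow_left₀ hMP hXC 2
    linarith
  have hfinal : 8 * A^2 * (P:ℝ)^2 ≤ 9 * X * Λ := by
    have h8 : M^2 * (8 * A^2 * (P:ℝ)^2) ≤ M^2 * (9 * X * Λ) := by
      calc M^2 * (8 * A^2 * (P:ℝ)^2) = 8 * (M * A * (P:ℝ))^2 := by ring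
      _ ≤ 8 * (X + C * Λ)^2 := hsq
      _ ≤ 9 * M^2 * X * Λ := hkey
      _ = M^2 * (9 * X * Λ) := by ring
    exact le_of_mul_le_mul_left h8 (by positivity)
  have hgoal : 8 * (P:ℝ)^2 * A ≤ 9 * (U * Λ) := by
    rw [← mul_le_mul_iff_of_pos_right ha0]
    calc 8 * (P:ℝ)^2 * A * A = 8 * A^2 * (P:ℝ)^2 := by ring
    _ ≤ 9 * X * Λ := hfinal
    _ = 9 * (U * Λ) * A := by rw [hX]; ring
  calc 8 * (P:ℝ)^2 ≤ 9 * (U * Λ) / A := by rw [le_div_iff₀ ha0]; linarith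
  _ = 9 * (U * Λ / A) := by ring

lemma mod_shift_cancel {L : ℕ} (hL : 0 < L) (t y : ℕ) (hy : y < L) :
    (t + (y + (L - t % L)) % L) % L = y := by
  rw [Nat.add_mod_mod]
  have h1 : t % L < L := Nat.mod_lt t hL
  have h2 : t % L ≤ t := Nat.mod_le t L
  have h3 : L * (t / L) + t % L = t := Nat.div_add_mod t L
  have e2 : t + (y + (L - t % L)) = y + L + L * (t / L) := by omega
  rw [e2, Nat.add_mul_mod_self_left, Nat.add_mod_right, Nat.mod_eq_of_lt hy]

lemma mod_shift_cancel' {L : ℕ} (hL : 0 < L) (t σ : ℕ) (hσ : σ < L) :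
    ((t + σ) % L + (L - t % L)) % L = σ := by
  rw [Nat.mod_add_mod]
  have h1 : t % L < L := Nat.mod_lt t hL
  have h2 : t % L ≤ t := Nat.mod_le t L
  have h3 : L * (t / L) + t % L = t := Nat.div_add_mod t L
  have e2 : t + σ + (L - t % L) = σ + L + L * (t / L) := by omega
  rw [e2, Nat.add_mul_mod_self_left, Nat.add_mod_right, Nat.mod_eq_of_lt hσ]

/-- Shifting is a bijection: the number of `σ < L` with `(t+σ) % L ∈ B` equals `|B|`. -/
lemma card_shift {L : ℕ} (hL : 0 < L) (t : ℕ) (B : Finset ℕ) (hB : ∀ y ∈ B, y < L) :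
    ((Finset.range L).filter (fun σ => (t + σ) % L ∈ B)).card = B.card := by
  apply Finset.card_bij' (fun σ _ => (t + σ) % L) (fun y _ => (y + (L - t % L)) % L)
  · intro σ hσ
    rw [Finset.mem_filter] at hσ
    exact hσ.2
  · intro y hy
    rw [Finset.mem_filter]
    constructor
    · rw [Finset.mem_range]
      exact Nat.mod_lt _ hL
    · rw [mod_shift_cancel hL t y (hB y hy)]
      exact hy
  · intro σ hσ
    rw [Finset.mem_filter, Finset.mem_range] at hσ
    exact mod_shift_cancel' hL t σ hσ.1
  · intro y hy
    exact mod_shift_cancel hL t y (hB y hy)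

/-- Double counting of shifted intersections. -/
lemma sum_card_shift {L : ℕ} (hL : 0 < L) (A B : Finset ℕ) (hB : ∀ y ∈ B, y < L) :
    ∑ σ ∈ Finset.range L, (A.filter (fun t => (t + σ) % L ∈ B)).card = A.card * B.card := by
  have h1 : ∀ σ, (A.filter (fun t => (t + σ) % L ∈ B)).card
      = ∑ t ∈ A, if (t + σ) % L ∈ B then 1 else 0 := by
    intro σ
    rw [Finset.card_filter]
  calc ∑ σ ∈ Finset.range L, (A.filter (fun t => (t + σ) % L ∈ B)).card
      = ∑ σ ∈ Finset.range L, ∑ t ∈ A, if (t + σ) % L ∈ B then 1 else 0 := by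
        apply Finset.sum_congr rfl; intro σ _; exact h1 σ
  _ = ∑ t ∈ A, ∑ σ ∈ Finset.range L, if (t + σ) % L ∈ B then 1 else 0 := Finset.sum_comm
  _ = ∑ t ∈ A, ((Finset.range L).filter (fun σ => (t + σ) % L ∈ B)).card := by
        apply Finset.sum_congr rfl; intro t _
        rw [Finset.card_filter]
  _ = ∑ _t ∈ A, B.card := by
        apply Finset.sum_congr rfl; intro t _
        exact card_shift hL t B hB
  _ = A.card * B.card := by rw [Finset.sum_const, smul_eq_mul]

/-- There is a shift meeting `B` in at most the average number of points. -/
lemma exists_small_shift {L : ℕ} (hL : 0 < L) (A B : Finset ℕ) (hB : ∀ y ∈ B, y < L) :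
    ∃ σ < L, (A.filter (fun t => (t + σ) % L ∈ B)).card * L ≤ A.card * B.card := by
  by_contra hcon
  push_neg at hcon
  have h1 : ∀ σ ∈ Finset.range L, A.card * B.card + 1 ≤ (A.filter (fun t => (t + σ) % L ∈ B)).card * L := by
    intro σ hσ
    rw [Finset.mem_range] at hσ
    exact hcon σ hσ
  have h2 : ∑ σ ∈ Finset.range L, (A.card * B.card + 1)
      ≤ ∑ σ ∈ Finset.range L, (A.filter (fun t => (t + σ) % L ∈ B)).card * L :=
    Finset.sum_le_sum h1
  rw [Finset.sum_const, Finset.card_range, smul_eq_mul, ← Finset.sum_mul, sum_card_shift hL A B hB] at h2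
  nlinarith [h2, hL]

/-- There is a shift meeting `B` in at least the average number of points. -/
lemma exists_big_shift {L : ℕ} (hL : 0 < L) (A B : Finset ℕ) (hB : ∀ y ∈ B, y < L) :
    ∃ σ < L, A.card * B.card ≤ (A.filter (fun t => (t + σ) % L ∈ B)).card * L := by
  by_contra hcon
  push_neg at hcon
  have h1 : ∀ σ ∈ Finset.range L, (A.filter (fun t => (t + σ) % L ∈ B)).card * L + 1 ≤ A.card * B.card := by
    intro σ hσ
    rw [Finset.mem_range] at hσ
    exact hcon σ hσ
  have h2 : ∑ σ ∈ Finset.range L, ((A.filter (fun t => (t + σ) % L ∈ B)).card * L + 1)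
      ≤ ∑ σ ∈ Finset.range L, A.card * B.card := Finset.sum_le_sum h1
  rw [Finset.sum_const, Finset.card_range, smul_eq_mul, Finset.sum_add_distrib,
      Finset.sum_const, Finset.card_range, smul_eq_mul, ← Finset.sum_mul,
      sum_card_shift hL A B hB] at h2
  nlinarith [h2, hL]

open scoped Classical in
/-- Core combinatorial bound: a group of transmitters `D` all able to reach a
receiver with receive-set `B` against adversarial offsets forces `9|B| ≥ 8|D|²`. -/
lemma core_bound {ι : Type*} [DecidableEq ι] (L : ℕ) (hL : 0 < L)
    (D : Finset ι) (hD : D.Nonempty) (A : ι → Finset ℕ) (B : Finset ℕ)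
    (hA : ∀ x ∈ D, A x ⊆ Finset.range L) (hB : B ⊆ Finset.range L)
    (hAne : ∀ x ∈ D, (A x).Nonempty)
    (good : ∀ i ∈ D, ∀ σ, σ < L → ∀ τ : ι → ℕ, (∀ x, τ x < L) →
      ∃ t, t ∈ A i ∧ (t + σ) % L ∈ B ∧ ∀ x ∈ D.erase i, (t + τ x) % L ∉ A x) :
    8 * (D.card : ℝ)^2 ≤ 9 * (B.card : ℝ) := by
  obtain ⟨i0, hi0D, hi0min⟩ := Finset.exists_min_image D (fun x => (A x).card) hD
  set a := (A i0).card with hadef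
  have ha1 : 1 ≤ a := Finset.card_pos.mpr (hAne i0 hi0D)
  have haL : a ≤ L := by
    have := Finset.card_le_card (hA i0 hi0D)
    simpa using this
  set b := B.card with hbdef
  have hBlt : ∀ y ∈ B, y < L := fun y hy => Finset.mem_range.mp (hB hy)
  obtain ⟨σ, hσL, hσ⟩ := exists_small_shift hL (A i0) B hBlt
  set U := (A i0).filter (fun t => (t + σ) % L ∈ B) with hUdef
  -- all "remaining" sets are nonempty thanks to the schedule property
  have hne : ∀ (X : Finset ι), X ⊆ D.erase i0 → ∀ τ : ι → ℕ, (∀ x, τ x < L) →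
      (U.filter (fun t => ∀ x ∈ X, (t + τ x) % L ∉ A x)).Nonempty := by
    intro X hX τ hτ
    obtain ⟨t, htA, htB, hblock⟩ := good i0 hi0D σ hσL τ hτ
    refine ⟨t, ?_⟩
    rw [Finset.mem_filter]
    refine ⟨?_, fun x hxX => hblock x (hX hxX)⟩
    rw [hUdef, Finset.mem_filter]
    exact ⟨htA, htB⟩
  -- adversary induction
  have adv : ∀ X : Finset ι, X ⊆ D.erase i0 → ∃ τ : ι → ℕ, (∀ x, τ x < L) ∧
      Phi a L ((U.filter (fun t => ∀ x ∈ X, (t + τ x) % L ∉ A x)).card) + (X.card : ℝ)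
        ≤ Phi a L U.card := by
    intro X
    induction X using Finset.induction_on with
    | empty =>
      intro _
      refine ⟨fun _ => 0, fun _ => hL, ?_⟩
      have : U.filter (fun t => ∀ x ∈ (∅ : Finset ι), (t + 0) % L ∉ A x) = U := by
        apply Finset.filter_true_of_mem
        intro t _
        intro x hx
        exact absurd hx (Finset.notMem_empty x)
      rw [this]
      simp
    | @insert x X hxX ih =>
      intro hins
      have hXsub : X ⊆ D.erase i0 := fun y hy => hins (Finset.mem_insert_of_mem hy)
      have hxD : x ∈ D.erase i0 := hins (Finset.mem_insert_self x X)
      obtain ⟨τ, hτ, hPhiX⟩ := ih hXsub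
      set R := U.filter (fun t => ∀ y ∈ X, (t + τ y) % L ∉ A y) with hRdef
      have hRne : R.Nonempty := hne X hXsub τ hτ
      have hRlt : ∀ t ∈ R, t < L := by
        intro t ht
        rw [hRdef, Finset.mem_filter, hUdef, Finset.mem_filter] at ht
        exact Finset.mem_range.mp (hA i0 hi0D ht.1.1)
      have hAxlt : ∀ y ∈ A x, y < L := fun y hy =>
        Finset.mem_range.mp (hA x (Finset.mem_of_mem_erase hxD) hy)
      obtain ⟨τx, hτxL, hkill⟩ := exists_big_shift hL R (A x) hAxlt
      set τ' := Function.update τ x τx with hτ'def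
      have hτ'lt : ∀ y, τ' y < L := by
        intro y
        rw [hτ'def]
        by_cases hyx : y = x
        · rw [hyx, Function.update_self]; exact hτxL
        · rw [Function.update_of_ne hyx]; exact hτ y
      set d := (R.filter (fun t => (t + τx) % L ∈ A x)).card with hddef
      have hsplit : (R.filter (fun t => (t + τx) % L ∉ A x)).card = R.card - d := by
        have := Finset.card_filter_add_card_filter_not
          (s := R) (p := fun t => (t + τx) % L ∈ A x)
        omega
      have hseteq : U.filter (fun t => ∀ y ∈ insert x X, (t + τ' y) % L ∉ A y)
          = R.filter (fun t => (t + τx) % L ∉ A x) := by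
        ext t
        simp only [hRdef, Finset.mem_filter, Finset.mem_insert]
        constructor
        · intro ⟨htU, hall⟩
          refine ⟨⟨htU, fun y hy => ?_⟩, ?_⟩
          · have := hall y (Or.inr hy)
            rwa [hτ'def, Function.update_of_ne (by rintro rfl; exact hxX hy)] at this
          · have := hall x (Or.inl rfl)
            rwa [hτ'def, Function.update_self] at this
        · intro ⟨⟨htU, hall⟩, hx⟩
          refine ⟨htU, fun y hy => ?_⟩
          rcases hy with rfl | hy
          · rwa [hτ'def, Function.update_self]
          · rw [hτ'def, Function.update_of_ne (by rintro rfl; exact hxX hy)]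
            exact hall y hy
      have hstep : Phi a L (R.card - d) + 1 ≤ Phi a L R.card := by
        apply Phi_step a L hL ha1
        · exact Finset.card_pos.mpr hRne
        · -- R.card * a ≤ d * L
          calc R.card * a ≤ R.card * (A x).card :=
                Nat.mul_le_mul_left _ (hi0min x (Finset.mem_of_mem_erase hxD))
          _ ≤ d * L := hkill
        · exact Finset.card_le_card (Finset.filter_subset _ _)
      refine ⟨τ', hτ'lt, ?_⟩
      rw [hseteq, hsplit, Finset.card_insert_of_notMem hxX]
      push_cast
      linarith
  -- conclude
  obtain ⟨τ, hτ, hfin⟩ := adv (D.erase i0) (Finset.Subset.refl _)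
  have hRne := hne (D.erase i0) (Finset.Subset.refl _) τ hτ
  have hR1 : 1 ≤ ((U.filter (fun t => ∀ x ∈ D.erase i0, (t + τ x) % L ∉ A x)).card) :=
    Finset.card_pos.mpr hRne
  have hPhi1 : (1:ℝ) ≤ Phi a L ((U.filter (fun t => ∀ x ∈ D.erase i0, (t + τ x) % L ∉ A x)).card) := by
    calc (1:ℝ) = Phi a L 1 := (Phi_one a L hL ha1 haL).symm
    _ ≤ _ := Phi_mono a L hR1
  have hcard_erase : (D.erase i0).card = D.card - 1 := Finset.card_erase_of_mem hi0D
  have hD1 : 1 ≤ D.card := Finset.card_pos.mpr hD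
  have hPhiD : (D.card : ℝ) ≤ Phi a L U.card := by
    have : ((D.erase i0).card : ℝ) = (D.card : ℝ) - 1 := by
      rw [hcard_erase]
      push_cast [hD1]
      ring
    rw [this] at hfin
    linarith
  -- U.card ≤ a*b/L
  set u := (a * b) / L with hudef
  have hUu : U.card ≤ u := by
    rw [hudef, Nat.le_div_iff_mul_le hL]
    exact hσ
  have hPhiu : (D.card : ℝ) ≤ Phi a L u :=
    le_trans hPhiD (Phi_mono a L hUu)
  have hmal := MAL a L u D.card hL ha1 haL hD1 hPhiu
  -- 9 u L / a ≤ 9 b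
  have hub : (u:ℝ) * L / a ≤ (b:ℝ) := by
    have h1 : u * L ≤ a * b := Nat.div_mul_le_self (a*b) L
    have h2 : ((u * L : ℕ):ℝ) ≤ ((a * b : ℕ):ℝ) := by exact_mod_cast h1
    push_cast at h2
    rw [div_le_iff₀ (by exact_mod_cast Nat.lt_of_lt_of_le Nat.zero_lt_one ha1 : (0:ℝ) < (a:ℝ))]
    linarith
  calc 8 * (D.card : ℝ)^2 ≤ 9 * ((u:ℝ) * L / a) := hmal
  _ ≤ 9 * (b:ℝ) := by linarith

end ScheduleAux

/-- if `{s_1,...,s_K}` is an `(M,K,L)`-schedule sequence set with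
respect to a partition into `W` nonempty groups with smallest group size `k`, and for
every node the number of transmitting symbols in its sequence (over one period) is a
multiple of `W`, then `L ≥ ⌈8(k−1)²·W/9⌉`. -/
theorem schedule_set_period_lower_bound_of_dvd
    (M K L W k : ℕ) (hL : 0 < L) (hW : 1 ≤ W) (hWM : W ≤ M) (hMK : M ≤ K)
    (G : Fin K → Fin W) (hG : Function.Surjective G)
    (hkmin : ∀ m : Fin W, k ≤ groupSize G m)
    (hkex : ∃ m : Fin W, groupSize G m = k)
    (s : Fin K → ℕ → SchedSym W) (hs : IsScheduleSet W K L G s)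
    (hdvd : ∀ i : Fin K,
      W ∣ ((Finset.range L).filter (fun t => s i t = SchedSym.T (G i))).card) :
    ⌈(8 * ((k : ℝ) - 1) ^ 2 * (W : ℝ)) / 9⌉ ≤ (L : ℤ) := by
  obtain ⟨m0, hm0⟩ := hkex
  -- every group is nonempty, hence k ≥ 1
  have hgrp_pos : ∀ m : Fin W, 0 < groupSize G m := by
    intro m
    obtain ⟨x, hx⟩ := hG m
    apply Finset.card_pos.mpr
    exact ⟨x, by simp [hx]⟩
  have hk1 : 1 ≤ k := by
    have := hgrp_pos m0
    omega
  rcases Nat.lt_or_ge k 2 with hk2 | hk2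
  · -- k = 1 : trivial
    have hkk : k = 1 := by omega
    subst hkk
    have h0 : (8 * (((1:ℕ)  : ℝ)- 1) ^ 2 * (W : ℝ)) / 9 = 0 := by norm_num
    rw [h0]
    norm_num
  -- main case
  have hgm0 : 0 < groupSize G m0 := hgrp_pos m0
  have : ((Finset.univ.filter (fun i => G i = m0))).Nonempty := Finset.card_pos.mp hgm0
  obtain ⟨j, hj⟩ := this
  have hGj : G j = m0 := by
    simpa using hj
  -- receive sets of node j
  set Bn : Fin W → Finset ℕ :=
    fun n => (Finset.range L).filter (fun t => s j t = SchedSym.R n) with hBndef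
  -- transmit sets on a channel n
  set An : Fin W → Fin K → Finset ℕ :=
    fun n x => (Finset.range L).filter (fun t => s x t = SchedSym.T n) with hAndef
  -- nonemptiness of transmit sets
  have hAne : ∀ (x : Fin K), x ≠ j → (An (G x) x).Nonempty := by
    intro x hxj
    by_cases hgx : G x = G j
    · obtain ⟨t, htL, h1, _, _⟩ := hs.intra (fun _ => 0) (fun _ => hL) x j hxj hgx
      refine ⟨t, ?_⟩
      rw [hAndef]
      simp only [Finset.mem_filter, Finset.mem_range]
      refine ⟨htL, ?_⟩
      rwa [Nat.add_zero, Nat.mod_eq_of_lt htL] at h1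
    · obtain ⟨t, htL, h1, _, _⟩ := hs.inter (fun _ => 0) (fun _ => hL) x j hgx
      refine ⟨t, ?_⟩
      rw [hAndef]
      simp only [Finset.mem_filter, Finset.mem_range]
      refine ⟨htL, ?_⟩
      rwa [Nat.add_zero, Nat.mod_eq_of_lt htL] at h1
  -- per-channel bound
  have key : ∀ n : Fin W, 8 * ((k:ℝ) - 1)^2 ≤ 9 * ((Bn n).card : ℝ) := by
    intro n
    by_cases hn : n = m0
    · -- own channel
      subst hn
      set D := (Finset.univ.filter (fun x => G x = n)).erase j with hDdef
      have hjmem : j ∈ Finset.univ.filter (fun x => G x = n) := by simp [hGj]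
      have hDcard : D.card = k - 1 := by
        rw [hDdef, Finset.card_erase_of_mem hjmem]
        have : (Finset.univ.filter (fun x => G x = n)).card = k := hm0
        omega
      have hDne : D.Nonempty := by
        apply Finset.card_pos.mp
        omega
      have hDmem : ∀ x ∈ D, x ≠ j ∧ G x = n := by
        intro x hx
        rw [hDdef, Finset.mem_erase, Finset.mem_filter] at hx
        exact ⟨hx.1, hx.2.2⟩
      have hbound := core_bound L hL D hDne (An n) (Bn n)
        (fun x _ => Finset.filter_subset _ _)
        (Finset.filter_subset _ _)
        (by
          intro x hx
          have h := hAne x (hDmem x hx).1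
          rwa [(hDmem x hx).2] at h)
        (by
          intro i hiD σ hσL τ hτ
          have hij : i ≠ j := (hDmem i hiD).1
          have hGi : G i = n := (hDmem i hiD).2
          set τf : Fin K → ℕ := fun y => if y = j then σ else if y = i then 0 else τ y with hτf
          have hτfb : ∀ y, τf y < L := by
            intro y
            rw [hτf]
            by_cases h1 : y = j
            · simp [h1, hσL]
            · by_cases h2 : y = i <;> simp [h1, h2, hij, hL, hτ y]
          obtain ⟨t, htL, h1, h2, h3⟩ := hs.intra τf hτfb i j hij (by rw [hGi, hGj])
          have hτfi : τf i = 0 := by rw [hτf]; simp [hij]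
          have hτfj : τf j = σ := by rw [hτf]; simp
          refine ⟨t, ?_, ?_, ?_⟩
          · rw [hAndef]
            simp only [Finset.mem_filter, Finset.mem_range]
            refine ⟨htL, ?_⟩
            rw [hτfi, Nat.add_zero, Nat.mod_eq_of_lt htL] at h1
            rwa [hGi] at h1
          · rw [hBndef]
            simp only [Finset.mem_filter, Finset.mem_range]
            refine ⟨Nat.mod_lt _ hL, ?_⟩
            rw [hτfj] at h2
            rwa [hGi] at h2
          · intro x hx
            rw [Finset.mem_erase] at hx
            have hxj : x ≠ j := (hDmem x hx.2).1
            have hGx : G x = n := (hDmem x hx.2).2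
            have := h3 x hx.1 hxj (by rw [hGx, hGi])
            rw [hτf] at this
            simp only [hxj, hx.1, if_false] at this
            intro hmem
            rw [hAndef] at hmem
            simp only [Finset.mem_filter, Finset.mem_range] at hmem
            rw [hGi] at this
            exact this hmem.2)
      rw [hDcard] at hbound
      have hcast : ((k - 1 : ℕ) : ℝ) = (k:ℝ) - 1 := by
        push_cast [hk1]
        ring
      rwa [hcast] at hbound
    · -- cross channel
      set D := Finset.univ.filter (fun x => G x = n) with hDdef
      have hDcard : k ≤ D.card := hkmin n
      have hDne : D.Nonempty := Finset.card_pos.mp (hgrp_pos n)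
      have hDmem : ∀ x ∈ D, G x = n := by
        intro x hx
        rw [hDdef, Finset.mem_filter] at hx
        exact hx.2
      have hjD : ∀ x ∈ D, x ≠ j := by
        intro x hx
        intro hxj
        apply hn
        rw [← hGj, ← (hDmem x hx), hxj]
      have hbound := core_bound L hL D hDne (An n) (Bn n)
        (fun x _ => Finset.filter_subset _ _)
        (Finset.filter_subset _ _)
        (by
          intro x hx
          have h := hAne x (hjD x hx)
          rwa [hDmem x hx] at h)
        (by
          intro i hiD σ hσL τ hτ
          have hij : i ≠ j := hjD i hiD
          have hGi : G i = n := hDmem i hiD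
          have hGiGj : G i ≠ G j := by
            rw [hGi, hGj]
            exact hn
          set τf : Fin K → ℕ := fun y => if y = j then σ else if y = i then 0 else τ y with hτf
          have hτfb : ∀ y, τf y < L := by
            intro y
            rw [hτf]
            by_cases h1 : y = j
            · simp [h1, hσL]
            · by_cases h2 : y = i <;> simp [h1, h2, hij, hL, hτ y]
          obtain ⟨t, htL, h1, h2, h3⟩ := hs.inter τf hτfb i j hGiGj
          have hτfi : τf i = 0 := by rw [hτf]; simp [hij]
          have hτfj : τf j = σ := by rw [hτf]; simp
          refine ⟨t, ?_, ?_, ?_⟩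
          · rw [hAndef]
            simp only [Finset.mem_filter, Finset.mem_range]
            refine ⟨htL, ?_⟩
            rw [hτfi, Nat.add_zero, Nat.mod_eq_of_lt htL] at h1
            rwa [hGi] at h1
          · rw [hBndef]
            simp only [Finset.mem_filter, Finset.mem_range]
            refine ⟨Nat.mod_lt _ hL, ?_⟩
            rw [hτfj] at h2
            rwa [hGi] at h2
          · intro x hx
            rw [Finset.mem_erase] at hx
            have hxj : x ≠ j := hjD x hx.2
            have hGx : G x = n := hDmem x hx.2
            have := h3 x hx.1 (by rw [hGx, hGi])
            rw [hτf] at this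
            simp only [hxj, hx.1, if_false] at this
            intro hmem
            rw [hAndef] at hmem
            simp only [Finset.mem_filter, Finset.mem_range] at hmem
            rw [hGi] at this
            exact this hmem.2)
      have hmono : ((k:ℝ) - 1)^2 ≤ ((D.card : ℕ):ℝ)^2 := by
        have h1 : (k:ℝ) - 1 ≤ (D.card : ℝ) := by
          have : (k:ℝ) ≤ (D.card : ℝ) := by exact_mod_cast hDcard
          linarith
        have h2 : (0:ℝ) ≤ (k:ℝ) - 1 := by
          have : (1:ℝ) ≤ (k:ℝ) := by exact_mod_cast hk1
          linarith
        exact pow_le_pow_left₀ h2 h1 2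
      linarith
  -- sum over channels
  have hdisj : ∀ n ∈ (Finset.univ : Finset (Fin W)), ∀ n' ∈ Finset.univ, n ≠ n' →
      Disjoint (Bn n) (Bn n') := by
    intro n _ n' _ hnn'
    rw [Finset.disjoint_left]
    intro t ht ht'
    rw [hBndef, Finset.mem_filter] at ht ht'
    apply hnn'
    have h := ht.2.symm.trans ht'.2
    exact SchedSym.R.inj h
  have hsum : ∑ n : Fin W, (Bn n).card ≤ L := by
    rw [← Finset.card_biUnion hdisj]
    calc (Finset.univ.biUnion Bn).card ≤ (Finset.range L).card := by
          apply Finset.card_le_card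
          intro t ht
          rw [Finset.mem_biUnion] at ht
          obtain ⟨n, _, htn⟩ := ht
          rw [hBndef] at htn
          exact Finset.mem_filter.mp htn |>.1
    _ = L := Finset.card_range L
  have hfinal : 8 * ((k:ℝ) - 1)^2 * (W:ℝ) ≤ 9 * (L:ℝ) := by
    have h1 : ∑ _n : Fin W, 8 * ((k:ℝ) - 1)^2 ≤ ∑ n : Fin W, 9 * ((Bn n).card : ℝ) :=
      Finset.sum_le_sum (fun n _ => key n)
    rw [Finset.sum_const, Finset.card_univ, Fintype.card_fin, nsmul_eq_mul] at h1
    have h2 : ∑ n : Fin W, 9 * ((Bn n).card : ℝ) = 9 * ((∑ n : Fin W, (Bn n).card : ℕ) : ℝ) := by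
      rw [← Finset.mul_sum]
      push_cast
      ring
    rw [h2] at h1
    have h3 : ((∑ n : Fin W, (Bn n).card : ℕ) : ℝ) ≤ (L:ℝ) := by exact_mod_cast hsum
    calc 8 * ((k:ℝ) - 1)^2 * (W:ℝ) = (W:ℝ) * (8 * ((k:ℝ) - 1)^2) := by ring
    _ ≤ 9 * ((∑ n : Fin W, (Bn n).card : ℕ) : ℝ) := h1
    _ ≤ 9 * (L:ℝ) := by linarith
  rw [Int.ceil_le]
  push_cast
  linarith
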